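/- (Equality (4.14)) Fix a basis (e_i) of V and let (g^{ij}) be the inverse of the Gram matrix (g(e_i,e_j)). Then for any F with the stated symmetries: Σ_{i,j} g^{ij} F(w,e_i,e_j) = 0 for all w ∈ V; consequently, if F satisfies the quasi-Kähler condition and Q(x,y,z) := (1/4){F(y,Jx,z) − F(Jy,x,z) + 2F(x,Jy,z)}, then Σ_{i,j} g^{ij} Q(e_i,e_j,z) = 0 for all z ∈ V. -/

import Mathlib

namespace ContractionAux
open Matrix

variable {V : Type*} [AddCommGroup V] [Module ℝ V]
variable {ι : Type*} [Fintype ι] [DecidableEq ι]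

lemma entry_eq (b : Module.Basis ι ℝ V) (f : V →ₗ[ℝ] V →ₗ[ℝ] ℝ) (u v : V →ₗ[ℝ] V) (i j : ι) :
    f (u (b i)) (v (b j)) =
      ((LinearMap.toMatrix b b u)ᵀ * (Matrix.of fun k l => f (b k) (b l)) *
        (LinearMap.toMatrix b b v)) i j := by
  conv_lhs => rw [← b.sum_repr (u (b i)), ← b.sum_repr (v (b j))]
  simp only [map_sum, _root_.map_smul, LinearMap.sum_apply, LinearMap.smul_apply, smul_eq_mul,
    Finset.mul_sum]
  simp only [Matrix.mul_apply, Matrix.transpose_apply, Matrix.of_apply,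
    LinearMap.toMatrix_apply, Finset.sum_mul]
  exact Finset.sum_congr rfl fun l _ => Finset.sum_congr rfl fun k _ => by ring

lemma sum_mul_trace (A B : Matrix ι ι ℝ) :
    ∑ i, ∑ j, A i j * B i j = (A * Bᵀ).trace := by
  simp [Matrix.trace, Matrix.mul_apply, Matrix.diag]

lemma contract (b : Module.Basis ι ℝ V) (f : V →ₗ[ℝ] V →ₗ[ℝ] ℝ) (u v : V →ₗ[ℝ] V)
    (N : Matrix ι ι ℝ) :
    ∑ i, ∑ j, N i j * f (u (b i)) (v (b j)) =
      ∑ i, ∑ j, ((LinearMap.toMatrix b b u) * N * (LinearMap.toMatrix b b v)ᵀ) i j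
        * f (b i) (b j) := by
  set U := LinearMap.toMatrix b b u with hU
  set Vm := LinearMap.toMatrix b b v with hV
  set P : Matrix ι ι ℝ := Matrix.of fun k l => f (b k) (b l) with hP
  have h1 : ∀ i j : ι, f (u (b i)) (v (b j)) = (Uᵀ * P * Vm) i j := entry_eq b f u v
  have h2 : ∀ i j : ι, f (b i) (b j) = P i j := fun i j => rfl
  simp only [h1, h2]
  rw [sum_mul_trace, sum_mul_trace]
  have e1 : N * (Uᵀ * P * Vm)ᵀ = (N * Vmᵀ * Pᵀ) * U := by
    simp only [Matrix.transpose_mul, Matrix.transpose_transpose, Matrix.mul_assoc]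
  have e2 : (U * N * Vmᵀ) * Pᵀ = U * (N * Vmᵀ * Pᵀ) := by
    simp only [Matrix.mul_assoc]
  rw [e1, e2, Matrix.trace_mul_comm]

lemma swap_sum (t : ι → ι → ℝ) : ∑ i, ∑ j, t i j = ∑ i, ∑ j, t j i :=
  Finset.sum_comm


end ContractionAux

open ContractionAux Matrix in
/-- Equality (4.14): the contraction `g^{ij} F(w,e_i,e_j)` vanishes, and
consequently the contraction `g^{ij} Q(e_i,e_j,z)` of the canonical potential
vanishes on a quasi-Kähler manifold with Norden metric. -/
theorem contraction_F_and_Q_vanish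
    {V : Type*} [AddCommGroup V] [Module ℝ V] [FiniteDimensional ℝ V]
    (g : LinearMap.BilinForm ℝ V)
    (hg_symm : ∀ x y : V, g x y = g y x)
    (hg_nd : ∀ x : V, (∀ y : V, g x y = 0) → x = 0)
    (J : V →ₗ[ℝ] V)
    (hJ : ∀ x : V, J (J x) = -x)
    (hNorden : ∀ x y : V, g (J x) (J y) = -g x y)
    (F : V →ₗ[ℝ] V →ₗ[ℝ] V →ₗ[ℝ] ℝ)
    (hF1 : ∀ x y z : V, F x y z = F x z y)
    (hF2 : ∀ x y z : V, F x y z = F x (J y) (J z))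
    {ι : Type*} [Fintype ι] [DecidableEq ι]
    (b : Module.Basis ι ℝ V)
    (Ginv : Matrix ι ι ℝ)
    (hGinv : (Matrix.of fun i j => g (b i) (b j)) * Ginv = 1) :
    (∀ w : V, ∑ i, ∑ j, Ginv i j * F w (b i) (b j) = 0) ∧
    ((∀ x y z : V, F x y z + F y z x + F z x y = 0) →
      ∀ Q : V → V → V → ℝ,
      (∀ x y z : V,
        Q x y z = (1/4) * (F y (J x) z - F (J y) x z + 2 * F x (J y) z)) →
      ∀ z : V, ∑ i, ∑ j, Ginv i j * Q (b i) (b j) z = 0) := by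
  set G : Matrix ι ι ℝ := Matrix.of fun i j => g (b i) (b j) with hGdef
  set M : Matrix ι ι ℝ := LinearMap.toMatrix b b J with hMdef
  -- basic matrix facts
  have hGsymm : Gᵀ = G := by
    ext i j; simp [hGdef, Matrix.transpose_apply, hg_symm]
  have hGleft : Ginv * G = 1 := mul_eq_one_comm.mp hGinv
  have hGinvSymm : Ginvᵀ = Ginv := by
    have h1 : Ginvᵀ * G = 1 := by
      have := congrArg Matrix.transpose hGinv
      rwa [Matrix.transpose_mul, hGsymm, Matrix.transpose_one] at this
    calc Ginvᵀ = Ginvᵀ * (G * Ginv) := by rw [hGinv, Matrix.mul_one]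
      _ = (Ginvᵀ * G) * Ginv := by rw [Matrix.mul_assoc]
      _ = Ginv := by rw [h1, Matrix.one_mul]
  have hJJ : J ∘ₗ J = -LinearMap.id := by
    ext x; simp [hJ]
  have hMM : M * M = (-1 : Matrix ι ι ℝ) := by
    rw [hMdef, ← LinearMap.toMatrix_comp b b b, hJJ, map_neg, LinearMap.toMatrix_id]
  have hMGM : Mᵀ * G * M = -G := by
    ext i j
    have h := entry_eq b g J J i j
    rw [hNorden] at h
    have : (Mᵀ * G * M) i j = -(g (b i) (b j)) := by
      rw [hMdef, hGdef, ← h]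
    simpa [hGdef] using this
  have hGM : G * M = Mᵀ * G := by
    have h := congrArg (· * M) hMGM
    simp only [Matrix.mul_assoc, hMM] at h
    -- h : Mᵀ * (G * (M * M)) = -G * M  hopefully
    have h2 : Mᵀ * (G * (-1 : Matrix ι ι ℝ)) = -G * M := by
      simpa [Matrix.mul_assoc] using h
    simp only [Matrix.mul_neg, Matrix.mul_one, Matrix.neg_mul, neg_inj] at h2
    exact h2.symm
  have hMGinv : M * Ginv = Ginv * Mᵀ := by
    calc M * Ginv = (Ginv * G) * M * Ginv := by rw [hGleft, Matrix.one_mul]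
      _ = Ginv * (G * M) * Ginv := by simp only [Matrix.mul_assoc]
      _ = Ginv * (Mᵀ * G) * Ginv := by rw [hGM]
      _ = Ginv * Mᵀ * (G * Ginv) := by simp only [Matrix.mul_assoc]
      _ = Ginv * Mᵀ := by rw [hGinv, Matrix.mul_one]
  have hKey : M * Ginv * Mᵀ = -Ginv := by
    calc M * Ginv * Mᵀ = Ginv * Mᵀ * Mᵀ := by rw [hMGinv]
      _ = Ginv * (M * M)ᵀ := by rw [Matrix.transpose_mul]; rw [Matrix.mul_assoc]
      _ = -Ginv := by rw [hMM]; simp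
  -- Part 1
  have part1 : ∀ w : V, ∑ i, ∑ j, Ginv i j * F w (b i) (b j) = 0 := by
    intro w
    have h3 : ∑ i, ∑ j, Ginv i j * F w (b i) (b j)
        = ∑ i, ∑ j, Ginv i j * F w (J (b i)) (J (b j)) :=
      Finset.sum_congr rfl fun i _ => Finset.sum_congr rfl fun j _ => by
        rw [← hF2]
    have h4 := contract b (F w) J J Ginv
    rw [← hMdef, hKey] at h4
    have h5 : ∑ i, ∑ j, (-Ginv) i j * F w (b i) (b j)
        = -∑ i, ∑ j, Ginv i j * F w (b i) (b j) := by
      simp [Finset.sum_neg_distrib]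
    have := h3.trans (h4.trans h5)
    linarith
  refine ⟨part1, ?_⟩
  intro hQK Q hQ z
  -- E : contraction in the first two slots vanishes
  have hE : ∀ z' : V, ∑ i, ∑ j, Ginv i j * F (b i) (b j) z' = 0 := by
    intro z'
    have h0 : ∑ i, ∑ j, Ginv i j *
        (F (b i) (b j) z' + F (b j) z' (b i) + F z' (b i) (b j)) = 0 := by
      simp [hQK]
    simp only [mul_add, Finset.sum_add_distrib] at h0
    have t2 : ∑ i, ∑ j, Ginv i j * F (b j) z' (b i)
        = ∑ i, ∑ j, Ginv i j * F (b i) (b j) z' := by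
      rw [swap_sum (fun i j => Ginv i j * F (b j) z' (b i))]
      exact Finset.sum_congr rfl fun i _ => Finset.sum_congr rfl fun j _ => by
        have hsy : Ginv j i = Ginv i j := by
          conv_rhs => rw [← hGinvSymm, Matrix.transpose_apply]
        rw [hsy, ← hF1]
    rw [t2, part1 z'] at h0
    linarith
  -- C : contraction with J on the second slot vanishes
  have hC : ∑ i, ∑ j, Ginv i j * F (b i) (J (b j)) z = 0 := by
    have h6 : ∑ i, ∑ j, Ginv i j * F (b i) (J (b j)) z
        = ∑ i, ∑ j, Ginv i j * (-(F (b i) (b j) (J z))) :=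
      Finset.sum_congr rfl fun i _ => Finset.sum_congr rfl fun j _ => by
        rw [hF2 (b i) (J (b j)) z, hJ]
        simp [map_neg]
    rw [h6]
    have h7 : ∑ i, ∑ j, Ginv i j * (-(F (b i) (b j) (J z)))
        = -∑ i, ∑ j, Ginv i j * F (b i) (b j) (J z) := by
      simp [Finset.sum_neg_distrib, mul_neg]
    rw [h7, hE (J z), neg_zero]
  -- D : mixed contraction vanishes
  have hD : ∑ i, ∑ j, Ginv i j * F z (b i) (J (b j)) = 0 := by
    have h8 : ∑ i, ∑ j, Ginv i j * F z (b i) (J (b j))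
        = ∑ i, ∑ j, Ginv i j * (-(F z (J (b i)) (b j))) :=
      Finset.sum_congr rfl fun i _ => Finset.sum_congr rfl fun j _ => by
        rw [hF1, hF2 z (J (b j)) (b i), hJ]
        simp [map_neg, hF1]
    -- compare the two mixed contractions via `contract`
    have c1 := contract b (F z) J LinearMap.id Ginv
    have c2 := contract b (F z) LinearMap.id J Ginv
    rw [← hMdef] at c1 c2
    simp only [LinearMap.toMatrix_id, LinearMap.id_coe, id_eq, Matrix.transpose_one,
      Matrix.mul_one, Matrix.one_mul] at c1 c2
    -- c1 : ∑∑ Ginv i j * F z (J (b i)) (b j) = ∑∑ (M * Ginv) i j * F z (b i) (b j)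
    -- c2 : ∑∑ Ginv i j * F z (b i) (J (b j)) = ∑∑ (Ginv * Mᵀ) i j * F z (b i) (b j)
    rw [← hMGinv] at c2
    have h9 : ∑ i, ∑ j, Ginv i j * (-(F z (J (b i)) (b j)))
        = -∑ i, ∑ j, Ginv i j * F z (J (b i)) (b j) := by
      simp [Finset.sum_neg_distrib, mul_neg]
    have h10 : ∑ i, ∑ j, Ginv i j * F z (b i) (J (b j))
        = -∑ i, ∑ j, Ginv i j * F z (b i) (J (b j)) := by
      calc ∑ i, ∑ j, Ginv i j * F z (b i) (J (b j))
          = ∑ i, ∑ j, Ginv i j * (-(F z (J (b i)) (b j))) := h8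
        _ = -∑ i, ∑ j, Ginv i j * F z (J (b i)) (b j) := h9
        _ = -∑ i, ∑ j, (M * Ginv) i j * F z (b i) (b j) := by rw [c1]
        _ = -∑ i, ∑ j, Ginv i j * F z (b i) (J (b j)) := by rw [← c2]
    linarith
  -- B : contraction with J on the first slot vanishes
  have hB : ∑ i, ∑ j, Ginv i j * F (J (b j)) (b i) z = 0 := by
    have h0 : ∑ i, ∑ j, Ginv i j *
        (F (b i) (J (b j)) z + F (J (b j)) z (b i) + F z (b i) (J (b j))) = 0 := by
      simp [hQK]
    simp only [mul_add, Finset.sum_add_distrib] at h0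
    have t2 : ∑ i, ∑ j, Ginv i j * F (J (b j)) z (b i)
        = ∑ i, ∑ j, Ginv i j * F (J (b j)) (b i) z :=
      Finset.sum_congr rfl fun i _ => Finset.sum_congr rfl fun j _ => by
        rw [← hF1]
    rw [t2, hC, hD] at h0
    linarith
  -- A : same as C after swapping the summation indices
  have hA : ∑ i, ∑ j, Ginv i j * F (b j) (J (b i)) z = 0 := by
    rw [swap_sum (fun i j => Ginv i j * F (b j) (J (b i)) z)]
    have : ∑ i, ∑ j, Ginv j i * F (b i) (J (b j)) z
        = ∑ i, ∑ j, Ginv i j * F (b i) (J (b j)) z :=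
      Finset.sum_congr rfl fun i _ => Finset.sum_congr rfl fun j _ => by
        have hsy : Ginv j i = Ginv i j := by
          conv_rhs => rw [← hGinvSymm, Matrix.transpose_apply]
        rw [hsy]
    rw [this, hC]
  -- combine
  have hsplit : ∀ i j : ι, Ginv i j * Q (b i) (b j) z
      = (1/4) * (Ginv i j * F (b j) (J (b i)) z)
        - (1/4) * (Ginv i j * F (J (b j)) (b i) z)
        + (1/2) * (Ginv i j * F (b i) (J (b j)) z) := by
    intro i j; rw [hQ]; ring
  calc ∑ i, ∑ j, Ginv i j * Q (b i) (b j) z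
      = ∑ i, ∑ j, ((1/4) * (Ginv i j * F (b j) (J (b i)) z)
          - (1/4) * (Ginv i j * F (J (b j)) (b i) z)
          + (1/2) * (Ginv i j * F (b i) (J (b j)) z)) := by
        exact Finset.sum_congr rfl fun i _ => Finset.sum_congr rfl fun j _ =>
          hsplit i j
    _ = (1/4) * ∑ i, ∑ j, Ginv i j * F (b j) (J (b i)) z
          - (1/4) * ∑ i, ∑ j, Ginv i j * F (J (b j)) (b i) z
          + (1/2) * ∑ i, ∑ j, Ginv i j * F (b i) (J (b j)) z := by
        simp [Finset.sum_add_distrib, Finset.sum_sub_distrib, Finset.mul_sum]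
    _ = 0 := by rw [hA, hB, hC]; ring
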